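/- For the middle-levels map f and any x with n or n+1 ones in a length-(2n+1) string: (a) κ(f^i(x)) = κ(x) for all i ≥ 0; (b) the necklaces ⟨x⟩, ⟨f(x)⟩, …, ⟨f^{κ(x)−1}(x)⟩ are pairwise distinct; (c) ⟨f^{κ(x)+i}(x)⟩ = ⟨f^i(x)⟩ for all i ≥ 0. -/

import Mathlib

/-- A Dyck word: a binary string (1 = `true`, 0 = `false`) with equally many 1s and 0s such
that every prefix has at least as many 1s as 0s. -/
def IsDyck (w : List Bool) : Prop :=
  w.count false = w.count true ∧ ∀ k, (w.take k).count false ≤ (w.take k).count true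

namespace Kappa17

open List

/-- Balance of a binary word: #true − #false, as an integer. -/
def bal (w : List Bool) : ℤ := (w.count true : ℤ) - (w.count false : ℤ)

lemma bal_nil : bal ([] : List Bool) = 0 := by simp [bal]

lemma bal_append (a b : List Bool) : bal (a ++ b) = bal a + bal b := by
  simp [bal, List.count_append]; ring

lemma bal_cons (b : Bool) (w : List Bool) :
    bal (b :: w) = (if b then 1 else -1) + bal w := by
  cases b <;> simp [bal, List.count_cons] <;> ring

lemma bal_singleton (b : Bool) : bal [b] = if b then 1 else -1 := by
  cases b <;> simp [bal]

lemma bal_cons_true (w : List Bool) : bal (true :: w) = 1 + bal w := by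
  rw [bal_cons]; simp

lemma bal_cons_false (w : List Bool) : bal (false :: w) = -1 + bal w := by
  rw [bal_cons]; simp

lemma bal_false1 : bal [false] = -1 := by simp [bal]

lemma count_add_count (w : List Bool) : w.count true + w.count false = w.length := by
  induction w with
  | nil => simp
  | cons a t ih => cases a <;> simp [List.count_cons] <;> omega

lemma bal_eq_zero_iff {w : List Bool} : bal w = 0 ↔ w.count false = w.count true := by
  unfold bal; omega

lemma bal_nonneg_iff {w : List Bool} : 0 ≤ bal w ↔ w.count false ≤ w.count true := by
  unfold bal; omega

lemma isDyck_iff {w : List Bool} :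
    IsDyck w ↔ bal w = 0 ∧ ∀ k, 0 ≤ bal (w.take k) := by
  simp only [IsDyck, bal_eq_zero_iff, bal_nonneg_iff]

lemma dyck_bal {w : List Bool} (h : IsDyck w) : bal w = 0 :=
  (isDyck_iff.1 h).1

lemma dyck_take {w : List Bool} (h : IsDyck w) (k : ℕ) : 0 ≤ bal (w.take k) :=
  (isDyck_iff.1 h).2 k

lemma dyck_count_true {w : List Bool} {m : ℕ} (h : IsDyck w) (hl : w.length = 2 * m) :
    w.count true = m := by
  have h1 := count_add_count w
  have h2 := h.1
  omega

lemma bal_take_add (l : List Bool) (a k : ℕ) :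
    bal (l.take (a + k)) = bal (l.take a) + bal ((l.drop a).take k) := by
  rw [List.take_add, bal_append]

lemma bal_drop (l : List Bool) (a : ℕ) : bal (l.drop a) = bal l - bal (l.take a) := by
  have h := bal_append (l.take a) (l.drop a)
  rw [List.take_append_drop] at h
  linarith

lemma bal_take_succ (l : List Bool) (k : ℕ) (h : k < l.length) :
    bal (l.take (k + 1)) = bal (l.take k) + (if l[k] then 1 else -1) := by
  rw [← List.take_concat_get h, List.concat_eq_append, bal_append, bal_singleton]

/-- `u 1 v 0` is Dyck whenever `u` and `v` are. -/
lemma dyck_concat {u v : List Bool} (hu : IsDyck u) (hv : IsDyck v) :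
    IsDyck (u ++ true :: v ++ [false]) := by
  rw [isDyck_iff]
  have hbu := dyck_bal hu
  have hbv := dyck_bal hv
  constructor
  · rw [bal_append, bal_append, bal_cons_true, bal_false1, hbu, hbv]; ring
  · intro k
    rw [List.take_append, bal_append,
      List.take_append, bal_append]
    have h1 := dyck_take hu k
    have hB0 : 0 ≤ bal ((true :: v).take (k - u.length)) := by
      cases hkk : k - u.length with
      | zero => simp [bal]
      | succ m =>
        rw [List.take_succ_cons, bal_cons_true]
        have := dyck_take hv m
        linarith
    rcases Nat.eq_zero_or_pos (k - (u ++ true :: v).length) with hz | hz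
    · rw [hz, List.take_zero, bal_nil]
      linarith
    · have hlen : (u ++ true :: v).length = u.length + v.length + 1 := by
        simp only [List.length_append, List.length_cons]
        omega
      have hful : (true :: v).take (k - u.length) = true :: v := by
        apply List.take_of_length_le
        simp only [List.length_cons]
        omega
      have hC : bal (([false] : List Bool).take (k - (u ++ true :: v).length))
          = -1 := by
        rw [List.take_of_length_le (by simp only [List.length_singleton]; omega),
          bal_false1]
      rw [hful, bal_cons_true, hbv, hC]
      linarith

/-! ### Reverse-complement -/

def rc (w : List Bool) : List Bool := (w.map not).reverse

lemma rc_append (a b : List Bool) : rc (a ++ b) = rc b ++ rc a := by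
  simp [rc]

lemma rc_cons (a : Bool) (l : List Bool) : rc (a :: l) = rc l ++ [!a] := by
  simp [rc]

lemma rc_rc (w : List Bool) : rc (rc w) = w := by
  induction w with
  | nil => simp [rc]
  | cons a t ih =>
    rw [rc_cons, rc_append, ih]
    cases a <;> rfl

lemma rc_length (w : List Bool) : (rc w).length = w.length := by simp [rc]

lemma count_map_not (w : List Bool) :
    (w.map not).count true = w.count false ∧ (w.map not).count false = w.count true := by
  induction w with
  | nil => simp
  | cons a t ih => cases a <;> simp [List.count_cons, ih.1, ih.2]

lemma bal_rc (w : List Bool) : bal (rc w) = -bal w := by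
  simp only [bal, rc, List.count_reverse, (count_map_not w).1, (count_map_not w).2]
  ring

lemma rc_take (w : List Bool) (k : ℕ) :
    (rc w).take k = rc (w.drop (w.length - k)) := by
  simp only [rc, List.take_reverse, ← List.map_drop, List.length_map]

lemma rc_dyck {w : List Bool} (h : IsDyck w) : IsDyck (rc w) := by
  rw [isDyck_iff]
  constructor
  · rw [bal_rc, dyck_bal h]; ring
  · intro k
    rw [rc_take, bal_rc, bal_drop, dyck_bal h]
    have := dyck_take h (w.length - k)
    linarith

/-! ### Arch decompositions -/

/-- First-arch decomposition of a nonempty Dyck word: `D = 1 u 0 v`. -/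
lemma decompA {D : List Bool} (hD : IsDyck D) (hne : D ≠ []) :
    ∃ u v, IsDyck u ∧ IsDyck v ∧ D = true :: u ++ false :: v := by
  classical
  have hbal := dyck_bal hD
  have htake := dyck_take hD
  have hex : ∃ j, 0 < j ∧ bal (D.take j) = 0 :=
    ⟨D.length, List.length_pos_iff.2 hne, by rw [List.take_length]; exact hbal⟩
  obtain ⟨m, hm0, hmbal, hmin, hmle⟩ :
      ∃ m, 0 < m ∧ bal (D.take m) = 0 ∧ (∀ j, 0 < j → j < m → 1 ≤ bal (D.take j)) ∧
        m ≤ D.length := by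
    refine ⟨Nat.find hex, (Nat.find_spec hex).1, (Nat.find_spec hex).2, ?_,
      Nat.find_min' hex ⟨List.length_pos_iff.2 hne, by rw [List.take_length]; exact hbal⟩⟩
    intro j hj0 hjm
    have h1 := Nat.find_min hex hjm
    have h2 := htake j
    have h3 : ¬ bal (D.take j) = 0 := fun hc => h1 ⟨hj0, hc⟩
    omega
  obtain ⟨d, t, rfl⟩ := List.exists_cons_of_ne_nil hne
  have htk1 : (d :: t).take 1 = [d] := by simp
  have hm2 : 2 ≤ m := by
    by_contra hcon
    have hm1 : m = 1 := by omega
    rw [hm1, htk1, bal_singleton] at hmbal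
    cases d <;> simp at hmbal
  have hd : d = true := by
    have h8 := hmin 1 (by omega) (by omega)
    rw [htk1, bal_singleton] at h8
    cases d with
    | false => simp at h8
    | true => rfl
  subst hd
  obtain ⟨q, rfl⟩ : ∃ q, m = q + 2 := ⟨m - 2, by omega⟩
  have hTbal : ∀ j, bal ((true :: t).take (j + 1)) = 1 + bal (t.take j) := by
    intro j; rw [List.take_succ_cons, bal_cons_true]
  have hlt : q + 2 ≤ t.length + 1 := by simpa using hmle
  have hqt : q < t.length := by omega
  have hballp : bal (t.take (q + 1)) = -1 := by
    have h9 := hTbal (q + 1)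
    rw [show q + 1 + 1 = q + 2 by omega] at h9
    omega
  have hballq : ∀ j, j < q + 1 → 0 ≤ bal (t.take j) := by
    intro j hj
    rcases Nat.eq_zero_or_pos j with rfl | hj0
    · simp [bal]
    · have h10 := hmin (j + 1) (by omega) (by omega)
      rw [hTbal j] at h10
      omega
  have hgetq : t[q] = false ∧ bal (t.take q) = 0 := by
    have hsucc := bal_take_succ t q hqt
    have h0 := hballq q (by omega)
    cases hget : t[q] with
    | false =>
      rw [hget] at hsucc
      norm_num at hsucc
      exact ⟨rfl, by omega⟩
    | true =>
      rw [hget] at hsucc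
      norm_num at hsucc
      exfalso
      omega
  refine ⟨t.take q, t.drop (q + 1), ?_, ?_, ?_⟩
  · rw [isDyck_iff]
    refine ⟨hgetq.2, fun k => ?_⟩
    rw [List.take_take]
    exact hballq _ (by omega)
  · rw [isDyck_iff]
    have hbt : bal t = -1 := by
      rw [bal_cons_true] at hbal; omega
    constructor
    · rw [bal_drop, hballp, hbt]; ring
    · intro k
      have h11 := bal_take_add t (q + 1) k
      have h12 : 0 ≤ bal (t.take (q + 1 + k)) + 1 := by
        have h13 := htake (q + 1 + k + 1)
        rw [hTbal (q + 1 + k)] at h13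
        omega
      omega
  · have ht : t = t.take q ++ false :: t.drop (q + 1) := by
      conv_lhs => rw [← List.take_append_drop q t]
      congr 1
      rw [List.drop_eq_getElem_cons hqt, hgetq.1]
    exact congrArg (List.cons true) ht

/-- Last-arch decomposition of a nonempty Dyck word: `D = u 1 v 0`. -/
lemma decompB {D : List Bool} (hD : IsDyck D) (hne : D ≠ []) :
    ∃ u v, IsDyck u ∧ IsDyck v ∧ D = u ++ true :: v ++ [false] := by
  have hne' : rc D ≠ [] := by
    intro h
    have := rc_length D
    rw [h] at this
    simp at this
    exact hne (List.length_eq_zero_iff.1 this.symm)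
  obtain ⟨u, v, hu, hv, h⟩ := decompA (rc_dyck hD) hne'
  refine ⟨rc v, rc u, rc_dyck hv, rc_dyck hu, ?_⟩
  have h2 := congrArg rc h
  rw [rc_rc] at h2
  rw [h2, rc_append, rc_cons, rc_cons]
  simp

/-- Uniqueness of the arch decomposition. -/
lemma arch_aux {u v u' v' : List Bool} (hu : IsDyck u) (hv : IsDyck v)
    (hu' : IsDyck u') (hlt : u.length < u'.length)
    (h : u ++ true :: v ++ [false] = u' ++ true :: v' ++ [false]) : False := by
  have hlen := congrArg List.length h
  simp only [List.length_append, List.length_cons, List.length_singleton] at hlen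
  have hle : u'.length ≤ u.length + 1 + v.length := by omega
  have hbal : bal ((u' ++ true :: v' ++ [false]).take u'.length) = 0 := by
    rw [List.take_append_of_le_length
        (by simp only [List.length_append, List.length_cons]; omega),
      List.take_append_of_le_length le_rfl, List.take_length]
    exact dyck_bal hu'
  rw [← h] at hbal
  set s := u'.length - u.length with hs
  have hs1 : 1 ≤ s := by omega
  have hz0 : u'.length - (u ++ true :: v).length = 0 := by
    simp only [List.length_append, List.length_cons]; omega
  have hrw : (u ++ true :: v ++ [false]).take u'.length
      = u ++ (true :: v.take (s - 1)) := by
    rw [List.take_append, hz0, List.take_zero, List.append_nil,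
      List.take_append, List.take_of_length_le (le_of_lt hlt)]
    congr 1
    rw [show u'.length - u.length = s - 1 + 1 by omega, List.take_succ_cons]
  rw [hrw, bal_append, bal_cons_true, dyck_bal hu] at hbal
  have := dyck_take hv (s - 1)
  linarith

lemma arch_unique {u v u' v' : List Bool} (hu : IsDyck u) (hv : IsDyck v)
    (hu' : IsDyck u') (hv' : IsDyck v')
    (h : u ++ true :: v ++ [false] = u' ++ true :: v' ++ [false]) :
    u = u' ∧ v = v' := by
  rcases lt_trichotomy u.length u'.length with hlt | heq | hgt
  · exact absurd (arch_aux hu hv hu' hlt h) (by simp)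
  · have h0 : u ++ true :: v = u' ++ true :: v' := (List.append_inj' h rfl).1
    obtain ⟨h1, h2⟩ := List.append_inj h0 heq
    refine ⟨h1, ?_⟩
    injection h2
  · exact absurd (arch_aux hu' hv' hu hgt h.symm) (by simp)

/-! ### Cycle-lemma uniqueness of canonical rotations -/

/-- A word of the shape (Dyck of length L) ++ [0] has no other rotation of the same shape. -/
lemma uniqueA {D D₂ : List Bool} (hD : IsDyck D) (hD₂ : IsDyck D₂) {d : ℕ}
    (hd0 : 0 < d) (hdlt : d < D.length + 1)
    (h : (D ++ [false]).rotate d = D₂ ++ [false]) : False := by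
  set w := D ++ [false] with hw
  have hwl : w.length = D.length + 1 := by simp [hw]
  have hlen2 : D₂.length = D.length := by
    have := congrArg List.length h
    simp [hwl] at this
    omega
  have hrot : w.rotate d = w.drop d ++ w.take d :=
    List.rotate_eq_drop_append_take (by omega)
  have hkey : w.drop d = D₂.take (D.length + 1 - d) := by
    have h2 : (w.drop d ++ w.take d).take (D.length + 1 - d)
        = (D₂ ++ [false]).take (D.length + 1 - d) := by rw [← hrot, h]
    rw [List.take_left' (by rw [List.length_drop]; omega),
      List.take_append_of_le_length (by omega)] at h2
    exact h2
  have hb1 : bal (w.drop d) = -1 - bal (D.take d) := by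
    rw [bal_drop, hw, bal_append, bal_false1,
      List.take_append_of_le_length (by omega), dyck_bal hD]
    ring
  have hb2 : 0 ≤ bal (D₂.take (D.length + 1 - d)) := dyck_take hD₂ _
  have hb3 := dyck_take hD d
  rw [← hkey] at hb2
  omega

/-- A word of the shape 1 ++ (Dyck of length L) has no other rotation of the same shape. -/
lemma uniqueB {D D₂ : List Bool} (hD : IsDyck D) (hD₂ : IsDyck D₂) {d : ℕ}
    (hd0 : 0 < d) (hdlt : d < D.length + 1)
    (h : (true :: D).rotate d = true :: D₂) : False := by
  set w := true :: D with hw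
  have hwl : w.length = D.length + 1 := by simp [hw]
  have hrot : w.rotate d = w.drop d ++ w.take d :=
    List.rotate_eq_drop_append_take (by omega)
  have hdroplen : (w.drop d).length = D.length + 1 - d := by
    rw [List.length_drop]; omega
  have hEq : w.drop (d + 1) ++ w.take d = D₂ := by
    have h2 := congrArg (List.drop 1) h
    rw [hrot, List.drop_append_of_le_length (by omega)] at h2
    rw [List.drop_drop] at h2
    simpa using h2
  have hwb : bal w = 1 := by
    rw [hw, bal_cons, dyck_bal hD]; simp
  have htksucc : ∀ j, bal (w.take (j + 1)) = 1 + bal (D.take j) := by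
    intro j; rw [hw, List.take_succ_cons, bal_cons]; simp
  -- total balance of D₂ is 0
  have hb0 : bal (w.drop (d + 1)) + bal (w.take d) = 0 := by
    rw [← bal_append, hEq, dyck_bal hD₂]
  -- prefix of D₂ of length |D| - d is w.drop (d+1)
  have hpre : 0 ≤ bal (w.drop (d + 1)) := by
    have h3 : D₂.take (D.length - d) = w.drop (d + 1) := by
      rw [← hEq, List.take_left' (by rw [List.length_drop]; omega)]
    have := dyck_take hD₂ (D.length - d)
    rwa [h3] at this
  have hdrop : bal (w.drop (d + 1)) = 1 - bal (w.take (d + 1)) := by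
    rw [bal_drop, hwb]
  have h4 : bal (w.take (d + 1)) = 1 + bal (D.take d) := htksucc d
  have h5 := dyck_take hD d
  -- so bal (w.take d) ≤ ... contradiction with positivity
  have h6 : bal (w.take d) = 1 + bal (D.take (d - 1)) := by
    have := htksucc (d - 1)
    rwa [show d - 1 + 1 = d by omega] at this
  have h7 := dyck_take hD (d - 1)
  omega

/-! ### Rotation equivalence -/

def Rot (x y : List Bool) : Prop := ∃ r, y = x.rotate r

lemma Rot.refl (x : List Bool) : Rot x x := ⟨0, (List.rotate_zero x).symm⟩

lemma Rot.trans {x y z : List Bool} (h1 : Rot x y) (h2 : Rot y z) : Rot x z := by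
  obtain ⟨r, rfl⟩ := h1
  obtain ⟨s, rfl⟩ := h2
  exact ⟨r + s, List.rotate_rotate x r s⟩

lemma Rot.symm {x y : List Bool} (h : Rot x y) : Rot y x := by
  obtain ⟨r, rfl⟩ := h
  rcases eq_or_ne x [] with rfl | hne
  · exact ⟨0, by simp⟩
  have hL : 0 < x.length := List.length_pos_iff.2 hne
  refine ⟨x.length - r % x.length, ?_⟩
  rw [List.rotate_rotate]
  have hdm := Nat.div_add_mod r x.length
  have hmlt : r % x.length < x.length := Nat.mod_lt _ hL
  have heq : r + (x.length - r % x.length) = x.length * (r / x.length + 1) := by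
    rw [Nat.mul_add, Nat.mul_one]
    omega
  rw [heq, ← List.rotate_mod, Nat.mul_mod_right, List.rotate_zero]

lemma Rot.length_eq {x y : List Bool} (h : Rot x y) : y.length = x.length := by
  obtain ⟨r, rfl⟩ := h; exact List.length_rotate x r

lemma Rot.count_eq {x y : List Bool} (h : Rot x y) (a : Bool) :
    y.count a = x.count a := by
  obtain ⟨r, rfl⟩ := h
  exact (List.rotate_perm x r).count_eq a

lemma Rot.rotate_right {x y : List Bool} (h : Rot x y) (s : ℕ) : Rot x (y.rotate s) :=
  h.trans ⟨s, rfl⟩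

/-- Two rotation-equivalent A-canonical words are equal. -/
lemma rotEqA {D D₂ : List Bool} (hD : IsDyck D) (hD₂ : IsDyck D₂)
    (hl : D₂.length = D.length)
    (h : Rot (D ++ [false]) (D₂ ++ [false])) : D ++ [false] = D₂ ++ [false] := by
  obtain ⟨r, hr⟩ := h
  have hwl : (D ++ [false]).length = D.length + 1 := by simp
  have h2 : (D ++ [false]).rotate (r % (D.length + 1)) = D₂ ++ [false] := by
    rw [show D.length + 1 = (D ++ [false]).length from hwl.symm, List.rotate_mod]
    exact hr.symm
  rcases Nat.eq_zero_or_pos (r % (D.length + 1)) with h0 | hpos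
  · rw [h0, List.rotate_zero] at h2; exact h2
  · exact absurd (uniqueA hD hD₂ hpos (Nat.mod_lt _ (by omega)) h2) (by simp)

/-- Two rotation-equivalent B-canonical words are equal. -/
lemma rotEqB {D D₂ : List Bool} (hD : IsDyck D) (hD₂ : IsDyck D₂)
    (hl : D₂.length = D.length)
    (h : Rot (true :: D) (true :: D₂)) : (true :: D) = (true :: D₂) := by
  obtain ⟨r, hr⟩ := h
  have hwl : (true :: D).length = D.length + 1 := by simp
  have h2 : (true :: D).rotate (r % (D.length + 1)) = true :: D₂ := by
    rw [show D.length + 1 = (true :: D).length from hwl.symm, List.rotate_mod]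
    exact hr.symm
  rcases Nat.eq_zero_or_pos (r % (D.length + 1)) with h0 | hpos
  · rw [h0, List.rotate_zero] at h2; exact h2
  · exact absurd (uniqueB hD hD₂ hpos (Nat.mod_lt _ (by omega)) h2) (by simp)

/-! ### The middle-levels setup -/

structure Setup (n : ℕ) (f : List Bool → List Bool) (ell : List Bool → ℕ) : Prop where
  hn : 1 ≤ n
  hf1 : ∀ u v : List Bool, IsDyck u → IsDyck v →
    f (true :: u ++ false :: v ++ [false]) = true :: u ++ true :: v ++ [false]
  hf2 : ∀ u v : List Bool, IsDyck u → IsDyck v →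
    f (true :: u ++ true :: v ++ [false]) = false :: u ++ true :: v ++ [false]
  hellA : ∀ x : List Bool, x.length = 2 * n + 1 → x.count true = n →
    ell x ≤ 2 * n ∧ IsDyck ((x.rotate (ell x)).take (2 * n))
  hellB : ∀ y : List Bool, y.length = 2 * n + 1 → y.count true = n + 1 →
    ell y ≤ 2 * n ∧ IsDyck ((y.rotate (ell y)).drop 1)
  hf3 : ∀ x : List Bool, x.length = 2 * n + 1 →
    (x.count true = n ∨ x.count true = n + 1) →
    f x = (f (x.rotate (ell x))).rotate (2 * n + 1 - ell x)

variable {n : ℕ} {f : List Bool → List Bool} {ell : List Bool → ℕ}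

lemma Setup.stepA (S : Setup n f ell) (x : List Bool)
    (hx : x.length = 2 * n + 1) (hcx : x.count true = n) :
    ∃ u v, IsDyck u ∧ IsDyck v ∧ u.length + v.length + 2 = 2 * n ∧
      IsDyck (true :: u ++ false :: v) ∧
      x.rotate (ell x) = true :: u ++ false :: v ++ [false] ∧
      f (x.rotate (ell x)) = true :: u ++ true :: v ++ [false] ∧
      f x = (true :: u ++ true :: v ++ [false]).rotate (2 * n + 1 - ell x) := by
  obtain ⟨hle, hdy⟩ := S.hellA x hx hcx
  set c := x.rotate (ell x) with hcdef
  have hcl : c.length = 2 * n + 1 := by rw [hcdef, List.length_rotate, hx]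
  have hccount : c.count true = n := by
    rw [hcdef, (List.rotate_perm x (ell x)).count_eq true, hcx]
  have hDl : (c.take (2 * n)).length = 2 * n := by
    rw [List.length_take, hcl]; omega
  have hDc : (c.take (2 * n)).count true = n := dyck_count_true hdy hDl
  have hsplit : c = c.take (2 * n) ++ c.drop (2 * n) := (List.take_append_drop _ _).symm
  have hdl : (c.drop (2 * n)).length = 1 := by rw [List.length_drop, hcl]; omega
  obtain ⟨b, hb⟩ := List.length_eq_one_iff.1 hdl
  have hbf : b = false := by
    have h1 : c.count true = (c.take (2 * n)).count true + (c.drop (2 * n)).count true := by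
      conv_lhs => rw [hsplit]
      rw [List.count_append]
    rw [hb, hccount, hDc] at h1
    cases b
    · rfl
    · simp at h1
  subst hbf
  have hc2 : c = c.take (2 * n) ++ [false] := by rw [← hb]; exact hsplit
  have hne : c.take (2 * n) ≠ [] := by
    intro hcon
    rw [hcon] at hDl
    simp at hDl
    have hn' := S.hn
    omega
  obtain ⟨u, v, hu, hv, hDuv⟩ := decompA hdy hne
  have hlenuv : u.length + v.length + 2 = 2 * n := by
    have h2 := congrArg List.length hDuv
    rw [hDl] at h2
    simp only [List.length_cons, List.length_append] at h2
    omega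
  have hcform : c = true :: u ++ false :: v ++ [false] := by rw [hc2, hDuv]
  have hdy' : IsDyck (true :: u ++ false :: v) := hDuv ▸ hdy
  have hfc : f c = true :: u ++ true :: v ++ [false] := by
    rw [hcform]
    exact S.hf1 u v hu hv
  have hfx : f x = (true :: u ++ true :: v ++ [false]).rotate (2 * n + 1 - ell x) := by
    rw [S.hf3 x hx (Or.inl hcx), ← hcdef, hfc]
  exact ⟨u, v, hu, hv, hlenuv, hdy', hcform, hfc, hfx⟩

lemma Setup.stepB (S : Setup n f ell) (x : List Bool)
    (hx : x.length = 2 * n + 1) (hcx : x.count true = n + 1) :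
    ∃ u v, IsDyck u ∧ IsDyck v ∧ u.length + v.length + 2 = 2 * n ∧
      x.rotate (ell x) = true :: u ++ true :: v ++ [false] ∧
      f (x.rotate (ell x)) = false :: u ++ true :: v ++ [false] ∧
      f x = (false :: u ++ true :: v ++ [false]).rotate (2 * n + 1 - ell x) := by
  obtain ⟨hle, hdy⟩ := S.hellB x hx hcx
  set c := x.rotate (ell x) with hcdef
  have hcl : c.length = 2 * n + 1 := by rw [hcdef, List.length_rotate, hx]
  have hccount : c.count true = n + 1 := by
    rw [hcdef, (List.rotate_perm x (ell x)).count_eq true, hcx]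
  have hEl : (c.drop 1).length = 2 * n := by rw [List.length_drop, hcl]; omega
  have hEc : (c.drop 1).count true = n := dyck_count_true hdy hEl
  have htl : (c.take 1).length = 1 := by rw [List.length_take, hcl]; omega
  obtain ⟨b, hb⟩ := List.length_eq_one_iff.1 htl
  have hbt : b = true := by
    have h1 : c.count true = (c.take 1).count true + (c.drop 1).count true := by
      conv_lhs => rw [← List.take_append_drop 1 c]
      rw [List.count_append]
    rw [hb, hccount, hEc] at h1
    cases b
    · simp at h1
    · rfl
  subst hbt
  have hc2 : c = true :: c.drop 1 := by
    conv_lhs => rw [← List.take_append_drop 1 c]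
    rw [hb, List.singleton_append]
  have hne : c.drop 1 ≠ [] := by
    intro hcon
    rw [hcon] at hEl
    simp at hEl
    have := S.hn
    omega
  obtain ⟨u, v, hu, hv, hEuv⟩ := decompB hdy hne
  have hlenuv : u.length + v.length + 2 = 2 * n := by
    have h2 := congrArg List.length hEuv
    rw [hEl] at h2
    simp only [List.length_cons, List.length_append, List.length_singleton, List.length_nil] at h2
    omega
  have hcform : c = true :: u ++ true :: v ++ [false] := by
    rw [hc2, hEuv]
    simp
  have hfc : f c = false :: u ++ true :: v ++ [false] := by
    rw [hcform]
    exact S.hf2 u v hu hv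
  have hfx : f x = (false :: u ++ true :: v ++ [false]).rotate (2 * n + 1 - ell x) := by
    rw [S.hf3 x hx (Or.inr hcx), ← hcdef, hfc]
  exact ⟨u, v, hu, hv, hlenuv, hcform, hfc, hfx⟩

lemma Setup.fA (S : Setup n f ell) {z : List Bool}
    (hl : z.length = 2 * n + 1) (h : z.count true = n) :
    (f z).length = 2 * n + 1 ∧ (f z).count true = n + 1 := by
  obtain ⟨u, v, hu, hv, hlen, _, _, _, hfx⟩ := S.stepA z hl h
  have e1 := count_add_count u
  have e2 := hu.1
  have e3 := count_add_count v
  have e4 := hv.1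
  constructor
  · rw [hfx, List.length_rotate]
    simp only [List.length_append, List.length_cons, List.length_singleton,
      List.length_nil]
    omega
  · rw [hfx, (List.rotate_perm _ _).count_eq true]
    simp
    omega

lemma Setup.fB (S : Setup n f ell) {z : List Bool}
    (hl : z.length = 2 * n + 1) (h : z.count true = n + 1) :
    (f z).length = 2 * n + 1 ∧ (f z).count true = n := by
  obtain ⟨u, v, hu, hv, hlen, _, _, hfx⟩ := S.stepB z hl h
  have e1 := count_add_count u
  have e2 := hu.1
  have e3 := count_add_count v
  have e4 := hv.1
  constructor
  · rw [hfx, List.length_rotate]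
    simp only [List.length_append, List.length_cons, List.length_singleton,
      List.length_nil]
    omega
  · rw [hfx, (List.rotate_perm _ _).count_eq true]
    simp
    omega

def Dom (n : ℕ) (z : List Bool) : Prop :=
  z.length = 2 * n + 1 ∧ (z.count true = n ∨ z.count true = n + 1)

lemma Setup.f_dom (S : Setup n f ell) {z : List Bool} (hz : Dom n z) : Dom n (f z) := by
  obtain ⟨hl, hcz⟩ := hz
  cases hcz with
  | inl h => exact ⟨(S.fA hl h).1, Or.inr (S.fA hl h).2⟩
  | inr h => exact ⟨(S.fB hl h).1, Or.inl (S.fB hl h).2⟩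

lemma Setup.rotStep (S : Setup n f ell) {a b : List Bool}
    (ha : Dom n a) (hab : Rot a b) : Rot (f a) (f b) := by
  have hbl : b.length = 2 * n + 1 := by rw [hab.length_eq, ha.1]
  have hbc : b.count true = a.count true := hab.count_eq true
  obtain ⟨hal, hac⟩ := ha
  have hRc : Rot (a.rotate (ell a)) (b.rotate (ell b)) :=
    Rot.trans (Rot.symm ⟨ell a, rfl⟩) (Rot.trans hab ⟨ell b, rfl⟩)
  cases hac with
  | inl h =>
    obtain ⟨u, v, hu, hv, hlen, hdy, hcf, hfc, hfx⟩ := S.stepA a hal h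
    obtain ⟨u', v', hu', hv', hlen', hdy', hcf', hfc', hfx'⟩ :=
      S.stepA b hbl (by rw [hbc, h])
    rw [hcf, hcf'] at hRc
    have hll : (true :: u' ++ false :: v').length = (true :: u ++ false :: v).length := by
      simp only [List.length_append, List.length_cons]
      omega
    have hEq := rotEqA hdy hdy' hll hRc
    have hceq : f (a.rotate (ell a)) = f (b.rotate (ell b)) := by
      rw [hcf, hcf', hEq]
    have h1 : Rot (f (a.rotate (ell a))) (f a) :=
      ⟨2 * n + 1 - ell a, by rw [hfx, hfc]⟩
    have h2 : Rot (f (b.rotate (ell b))) (f b) :=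
      ⟨2 * n + 1 - ell b, by rw [hfx', hfc']⟩
    refine Rot.trans (Rot.symm h1) ?_
    rw [hceq]
    exact h2
  | inr h =>
    obtain ⟨u, v, hu, hv, hlen, hcf, hfc, hfx⟩ := S.stepB a hal h
    obtain ⟨u', v', hu', hv', hlen', hcf', hfc', hfx'⟩ :=
      S.stepB b hbl (by rw [hbc, h])
    rw [hcf, hcf'] at hRc
    have e1 : true :: u ++ true :: v ++ [false] = true :: (u ++ true :: v ++ [false]) := by
      simp
    have e2 : true :: u' ++ true :: v' ++ [false] = true :: (u' ++ true :: v' ++ [false]) := by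
      simp
    rw [e1, e2] at hRc
    have hll : (u' ++ true :: v' ++ [false]).length = (u ++ true :: v ++ [false]).length := by
      simp only [List.length_append, List.length_cons, List.length_singleton]
      omega
    have hEq := rotEqB (dyck_concat hu hv) (dyck_concat hu' hv') hll hRc
    have hceq : f (a.rotate (ell a)) = f (b.rotate (ell b)) := by
      rw [hcf, hcf', e1, e2, hEq]
    have h1 : Rot (f (a.rotate (ell a))) (f a) :=
      ⟨2 * n + 1 - ell a, by rw [hfx, hfc]⟩
    have h2 : Rot (f (b.rotate (ell b))) (f b) :=
      ⟨2 * n + 1 - ell b, by rw [hfx', hfc']⟩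
    refine Rot.trans (Rot.symm h1) ?_
    rw [hceq]
    exact h2

lemma Setup.rotBack (S : Setup n f ell) {a b : List Bool}
    (hal : a.length = 2 * n + 1) (hbl : b.length = 2 * n + 1)
    (hac : a.count true = n ∨ a.count true = n + 1)
    (hbc : b.count true = a.count true)
    (h : Rot (f a) (f b)) : Rot a b := by
  cases hac with
  | inl hA =>
    obtain ⟨u, v, hu, hv, hlen, hdy, hcf, hfc, hfx⟩ := S.stepA a hal hA
    obtain ⟨u', v', hu', hv', hlen', hdy', hcf', hfc', hfx'⟩ :=
      S.stepA b hbl (by rw [hbc, hA])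
    have hra : Rot (f (a.rotate (ell a))) (f a) :=
      ⟨2 * n + 1 - ell a, by rw [hfx, hfc]⟩
    have hrb : Rot (f (b.rotate (ell b))) (f b) :=
      ⟨2 * n + 1 - ell b, by rw [hfx', hfc']⟩
    have hRe : Rot (f (a.rotate (ell a))) (f (b.rotate (ell b))) :=
      hra.trans (h.trans hrb.symm)
    rw [hfc, hfc'] at hRe
    have e1 : true :: u ++ true :: v ++ [false] = true :: (u ++ true :: v ++ [false]) := by
      simp
    have e2 : true :: u' ++ true :: v' ++ [false] = true :: (u' ++ true :: v' ++ [false]) := by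
      simp
    rw [e1, e2] at hRe
    have hll : (u' ++ true :: v' ++ [false]).length = (u ++ true :: v ++ [false]).length := by
      simp only [List.length_append, List.length_cons, List.length_singleton]
      omega
    have hEq := rotEqB (dyck_concat hu hv) (dyck_concat hu' hv') hll hRe
    have hD : u ++ true :: v ++ [false] = u' ++ true :: v' ++ [false] := by
      injection hEq
    obtain ⟨hueq, hveq⟩ := arch_unique hu hv hu' hv' hD
    subst hueq
    subst hveq
    have hceq : a.rotate (ell a) = b.rotate (ell b) := by rw [hcf, hcf']
    have h6 : Rot (a.rotate (ell a)) b := by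
      rw [hceq]
      exact Rot.symm ⟨ell b, rfl⟩
    exact Rot.trans ⟨ell a, rfl⟩ h6
  | inr hB =>
    obtain ⟨u, v, hu, hv, hlen, hcf, hfc, hfx⟩ := S.stepB a hal hB
    obtain ⟨u', v', hu', hv', hlen', hcf', hfc', hfx'⟩ :=
      S.stepB b hbl (by rw [hbc, hB])
    have hra : Rot (f (a.rotate (ell a))) (f a) :=
      ⟨2 * n + 1 - ell a, by rw [hfx, hfc]⟩
    have hrb : Rot (f (b.rotate (ell b))) (f b) :=
      ⟨2 * n + 1 - ell b, by rw [hfx', hfc']⟩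
    have hRe : Rot (f (a.rotate (ell a))) (f (b.rotate (ell b))) :=
      hra.trans (h.trans hrb.symm)
    rw [hfc, hfc'] at hRe
    have e1 : false :: u ++ true :: v ++ [false] = false :: (u ++ true :: v ++ [false]) := by
      simp
    have e2 : false :: u' ++ true :: v' ++ [false]
        = false :: (u' ++ true :: v' ++ [false]) := by
      simp
    rw [e1, e2] at hRe
    have hrot1 : ∀ t : List Bool, (false :: t).rotate 1 = t ++ [false] := by
      intro t
      rw [List.rotate_cons_succ, List.rotate_zero]
    have hR2 : Rot ((u ++ true :: v ++ [false]) ++ [false])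
        ((u' ++ true :: v' ++ [false]) ++ [false]) := by
      have r1 := hrot1 (u ++ true :: v ++ [false])
      have r2 := hrot1 (u' ++ true :: v' ++ [false])
      rw [← r1, ← r2]
      exact Rot.trans (Rot.symm ⟨1, rfl⟩) (Rot.trans hRe ⟨1, rfl⟩)
    have hll : (u' ++ true :: v' ++ [false]).length = (u ++ true :: v ++ [false]).length := by
      simp only [List.length_append, List.length_cons, List.length_singleton]
      omega
    have hEq := rotEqA (dyck_concat hu hv) (dyck_concat hu' hv') hll hR2
    have hD : u ++ true :: v ++ [false] = u' ++ true :: v' ++ [false] :=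
      (List.append_inj' hEq rfl).1
    obtain ⟨hueq, hveq⟩ := arch_unique hu hv hu' hv' hD
    subst hueq
    subst hveq
    have hceq : a.rotate (ell a) = b.rotate (ell b) := by rw [hcf, hcf']
    have h6 : Rot (a.rotate (ell a)) b := by
      rw [hceq]
      exact Rot.symm ⟨ell b, rfl⟩
    exact Rot.trans ⟨ell a, rfl⟩ h6

lemma Setup.iter_dom (S : Setup n f ell) {z : List Bool} (hz : Dom n z) (i : ℕ) :
    Dom n (f^[i] z) := by
  induction i with
  | zero => simpa
  | succ i ih =>
    rw [Function.iterate_succ_apply']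
    exact S.f_dom ih

lemma Setup.iter_fwd (S : Setup n f ell) {a b : List Bool}
    (ha : Dom n a) (hab : Rot a b) (i : ℕ) : Rot (f^[i] a) (f^[i] b) := by
  induction i with
  | zero => simpa
  | succ i ih =>
    rw [Function.iterate_succ_apply', Function.iterate_succ_apply']
    exact S.rotStep (S.iter_dom ha i) ih

lemma Setup.iter_bwd (S : Setup n f ell) {a b : List Bool} (i : ℕ)
    (ha : Dom n a) (hb : Dom n b)
    (h : Rot (f^[i] a) (f^[i] b)) : Rot a b := by
  induction i generalizing a b with
  | zero => simpa using h
  | succ i ih =>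
    rw [Function.iterate_succ_apply, Function.iterate_succ_apply] at h
    have h2 : Rot (f a) (f b) := ih (S.f_dom ha) (S.f_dom hb) h
    apply S.rotBack ha.1 hb.1 ha.2 ?_ h2
    have hcnt : (f b).count true = (f a).count true := h2.count_eq true
    rcases ha.2 with hA | hB <;> rcases hb.2 with hA' | hB'
    · rw [hA', hA]
    · exfalso
      rw [(S.fA ha.1 hA).2, (S.fB hb.1 hB').2] at hcnt
      omega
    · exfalso
      rw [(S.fB ha.1 hB).2, (S.fA hb.1 hA').2] at hcnt
      omega
    · rw [hB', hB]


end Kappa17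

/-- Let `f` be the middle-levels map on strings of length `2n+1` with `n`
or `n+1` ones, defined by `f(1 u 0 v 0) = 1 u 1 v 0` and `f(1 u 1 v 0) = 0 u 1 v 0` for
Dyck words `u, v`, extended by conjugation with the canonical cyclic rotation `ℓ`:
`f(x) = σ^{−ℓ(x)}(f(σ^{ℓ(x)}(x)))`.  With `κ(z) := min{ i > 0 : ⟨f^i(z)⟩ = ⟨z⟩ }` (necklace
= set of cyclic rotations):
(a) `κ(f^i(x)) = κ(x)` for all `i ≥ 0`;
(b) the necklaces `⟨f^i(x)⟩`, `0 ≤ i < κ(x)`, are pairwise distinct;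
(c) `⟨f^{κ(x)+i}(x)⟩ = ⟨f^i(x)⟩` for all `i ≥ 0`. -/
theorem kappa_properties (n : ℕ) (hn : 1 ≤ n)
    (f : List Bool → List Bool) (ell : List Bool → ℕ)
    (hf1 : ∀ u v : List Bool, IsDyck u → IsDyck v →
      f (true :: u ++ false :: v ++ [false]) = true :: u ++ true :: v ++ [false])
    (hf2 : ∀ u v : List Bool, IsDyck u → IsDyck v →
      f (true :: u ++ true :: v ++ [false]) = false :: u ++ true :: v ++ [false])
    (hellA : ∀ x : List Bool, x.length = 2 * n + 1 → x.count true = n →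
      ell x ≤ 2 * n ∧ IsDyck ((x.rotate (ell x)).take (2 * n)))
    (hellB : ∀ y : List Bool, y.length = 2 * n + 1 → y.count true = n + 1 →
      ell y ≤ 2 * n ∧ IsDyck ((y.rotate (ell y)).drop 1))
    (hf3 : ∀ x : List Bool, x.length = 2 * n + 1 →
      (x.count true = n ∨ x.count true = n + 1) →
      f x = (f (x.rotate (ell x))).rotate (2 * n + 1 - ell x))
    (x : List Bool) (hx : x.length = 2 * n + 1)
    (hc : x.count true = n ∨ x.count true = n + 1) :
    (∀ i : ℕ, sInf {k | 0 < k ∧ ∃ r : ℕ, f^[k] (f^[i] x) = (f^[i] x).rotate r}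
        = sInf {k | 0 < k ∧ ∃ r : ℕ, f^[k] x = x.rotate r}) ∧
    (∀ i j : ℕ, i < j → j < sInf {k | 0 < k ∧ ∃ r : ℕ, f^[k] x = x.rotate r} →
      ¬ ∃ r : ℕ, f^[j] x = (f^[i] x).rotate r) ∧
    (∀ i : ℕ, ∃ r : ℕ,
      f^[sInf {k | 0 < k ∧ ∃ r : ℕ, f^[k] x = x.rotate r} + i] x = (f^[i] x).rotate r) := by
  classical
  have S : Kappa17.Setup n f ell := ⟨hn, hf1, hf2, hellA, hellB, hf3⟩
  have hdomx : Kappa17.Dom n x := ⟨hx, hc⟩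
  set T : Set ℕ := {k | 0 < k ∧ ∃ r : ℕ, f^[k] x = x.rotate r} with hT
  have hcomm : ∀ i k : ℕ, f^[k] (f^[i] x) = f^[i] (f^[k] x) := by
    intro i k
    rw [← Function.iterate_add_apply, ← Function.iterate_add_apply, Nat.add_comm]
  have hTne : T.Nonempty := by
    haveI : Finite {l : List Bool // l.length = 2 * n + 1} :=
      inferInstanceAs (Finite (List.Vector Bool (2 * n + 1)))
    obtain ⟨i, j, hne, heq⟩ := Finite.exists_ne_map_eq_of_infinite
      (fun i : ℕ => (⟨f^[i] x, (S.iter_dom hdomx i).1⟩ : List.Vector Bool (2 * n + 1)))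
    have heq' : f^[i] x = f^[j] x := congrArg Subtype.val heq
    have key : ∀ i j : ℕ, i < j → f^[i] x = f^[j] x → T.Nonempty := by
      intro i j hij he
      have h1 : f^[j] x = f^[i] (f^[j - i] x) := by
        rw [← Function.iterate_add_apply]
        congr 1
        omega
      rw [h1] at he
      have h2 : Kappa17.Rot (f^[i] x) (f^[i] (f^[j - i] x)) :=
        ⟨0, by rw [List.rotate_zero]; exact he.symm⟩
      have h3 : Kappa17.Rot x (f^[j - i] x) :=
        S.iter_bwd i hdomx (S.iter_dom hdomx _) h2
      exact ⟨j - i, by omega, h3⟩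
    rcases hne.lt_or_gt with hlt | hlt
    · exact key i j hlt heq'
    · exact key j i hlt heq'.symm
  have hκT := Nat.sInf_mem hTne
  have hκpos : 0 < sInf T := hκT.1
  have hκrot : Kappa17.Rot x (f^[sInf T] x) := hκT.2
  refine ⟨?_, ?_, ?_⟩
  · intro i
    have hset : {k | 0 < k ∧ ∃ r : ℕ, f^[k] (f^[i] x) = (f^[i] x).rotate r} = T := by
      ext k
      simp only [hT, Set.mem_setOf_eq]
      constructor
      · rintro ⟨hk, r, hr⟩
        refine ⟨hk, ?_⟩
        rw [hcomm i k] at hr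
        exact S.iter_bwd i hdomx (S.iter_dom hdomx k) ⟨r, hr⟩
      · rintro ⟨hk, hr⟩
        refine ⟨hk, ?_⟩
        obtain ⟨r, hr2⟩ := S.iter_fwd hdomx (hr : Kappa17.Rot x (f^[k] x)) i
        exact ⟨r, by rw [hcomm i k]; exact hr2⟩
    rw [hset]
  · intro i j hij hj
    rintro ⟨r, hr⟩
    have h1 : f^[j] x = f^[i] (f^[j - i] x) := by
      rw [← Function.iterate_add_apply]
      congr 1
      omega
    have h2 : Kappa17.Rot (f^[i] x) (f^[i] (f^[j - i] x)) := ⟨r, by rw [← h1]; exact hr⟩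
    have h3 : Kappa17.Rot x (f^[j - i] x) :=
      S.iter_bwd i hdomx (S.iter_dom hdomx _) h2
    have h4 : j - i ∈ T := ⟨by omega, h3⟩
    have h5 := Nat.sInf_le h4
    omega
  · intro i
    obtain ⟨r, hr⟩ := S.iter_fwd hdomx hκrot i
    refine ⟨r, ?_⟩
    rw [show sInf T + i = i + sInf T by omega, Function.iterate_add_apply]
    exact hr
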